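/- Define f₁ : ℝ² → ℝ by f₁(x) := 2x₁² + x₂² + x₂ + x₁² sin(ln|x₁|) if x₁ ≠ 0, and f₁(x) := x₂² + x₂ if x₁ = 0. Then f₁ is Fréchet differentiable on ℝ² with ∇f₁(x) = (4x₁ + 2x₁ sin(ln|x₁|) + x₁ cos(ln|x₁|), 2x₂ + 1) for x₁ ≠ 0 and ∇f₁(x) = (0, 2x₂ + 1) for x₁ = 0; moreover ∇f₁ is locally Lipschitz on ℝ² (so f₁ is a C^{1,1} function). -/

import Mathlib

open Filter Topology Set
open scoped InnerProductSpace

noncomputable section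

/-- The `C^{1,1}` function `f₁` of Example 4.1. -/
def f1 (x : EuclideanSpace ℝ (Fin 2)) : ℝ :=
  if x 0 = 0 then (x 1) ^ 2 + x 1
  else 2 * (x 0) ^ 2 + (x 1) ^ 2 + x 1 + (x 0) ^ 2 * Real.sin (Real.log |x 0|)

/-- The claimed gradient of `f₁`. -/
def grad1 (x : EuclideanSpace ℝ (Fin 2)) : EuclideanSpace ℝ (Fin 2) :=
  if x 0 = 0 then (WithLp.equiv 2 (Fin 2 → ℝ)).symm ![0, 2 * x 1 + 1]
  else (WithLp.equiv 2 (Fin 2 → ℝ)).symm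
    ![4 * x 0 + 2 * x 0 * Real.sin (Real.log |x 0|) + x 0 * Real.cos (Real.log |x 0|),
      2 * x 1 + 1]

open Asymptotics NNReal

def gg (t : ℝ) : ℝ := 2 * t ^ 2 + t ^ 2 * Real.sin (Real.log t)
def gg' (t : ℝ) : ℝ := 4 * t + 2 * t * Real.sin (Real.log t) + t * Real.cos (Real.log t)
def gg'' (t : ℝ) : ℝ := 4 + Real.sin (Real.log t) + 3 * Real.cos (Real.log t)

lemma hgg_deriv (t : ℝ) : HasDerivAt gg (gg' t) t := by
  rcases eq_or_ne t 0 with rfl | ht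
  · -- derivative at 0
    have h0 : gg' 0 = 0 := by simp [gg']
    rw [h0, hasDerivAt_iff_isLittleO]
    have hg0 : gg 0 = 0 := by simp [gg]
    simp only [hg0, sub_zero, smul_zero]
    have h1 : (fun t : ℝ => gg t) =O[𝓝 0] fun t => t ^ 2 := by
      apply IsBigO.of_bound 3
      filter_upwards with t
      have hs : |Real.sin (Real.log t)| ≤ 1 := Real.abs_sin_le_one _
      have : |gg t| ≤ 2 * t ^ 2 + t ^ 2 * 1 := by
        calc |gg t| ≤ |2 * t ^ 2| + |t ^ 2 * Real.sin (Real.log t)| := abs_add_le _ _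
        _ ≤ 2 * t ^ 2 + t ^ 2 * 1 := by
            rw [abs_mul, abs_mul, abs_of_nonneg (sq_nonneg t)]
            have h2 : |(2:ℝ)| = 2 := by norm_num
            rw [h2]
            gcongr
      simpa [abs_of_nonneg (sq_nonneg t)] using this.trans (by ring_nf; nlinarith [sq_nonneg t])
    have h2 : (fun t : ℝ => t ^ 2) =o[𝓝 0] fun t => t := by
      have : (fun t : ℝ => t) =o[𝓝 0] fun _ => (1 : ℝ) :=
        (isLittleO_one_iff ℝ).mpr tendsto_id
      simpa [pow_two] using this.mul_isBigO (isBigO_refl (fun t : ℝ => t) (𝓝 0))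
    exact h1.trans_isLittleO h2
  · have hlog : HasDerivAt Real.log t⁻¹ t := Real.hasDerivAt_log ht
    have hsin : HasDerivAt (fun t => Real.sin (Real.log t)) (Real.cos (Real.log t) * t⁻¹) t :=
      (Real.hasDerivAt_sin _).comp t hlog
    have h1 : HasDerivAt (fun t : ℝ => t ^ 2) (2 * t) t := by
      simpa using hasDerivAt_pow 2 t
    have h2 := (h1.mul hsin)
    have h3 := (h1.const_mul (2 : ℝ)).add h2
    refine h3.congr_deriv ?_
    simp only [gg']
    field_simp
    ring

lemma hgg'_deriv {t : ℝ} (ht : t ≠ 0) : HasDerivAt gg' (gg'' t) t := by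
  have hlog : HasDerivAt Real.log t⁻¹ t := Real.hasDerivAt_log ht
  have hsin : HasDerivAt (fun t => Real.sin (Real.log t)) (Real.cos (Real.log t) * t⁻¹) t :=
    (Real.hasDerivAt_sin _).comp t hlog
  have hcos : HasDerivAt (fun t => Real.cos (Real.log t)) (-Real.sin (Real.log t) * t⁻¹) t :=
    (Real.hasDerivAt_cos _).comp t hlog
  have hid : HasDerivAt (fun t : ℝ => t) 1 t := hasDerivAt_id t
  have h := ((hid.const_mul (4:ℝ)).add ((hid.const_mul (2:ℝ)).mul hsin)).add (hid.mul hcos)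
  refine h.congr_deriv ?_
  simp only [gg'']
  field_simp
  ring

lemma gg'_bound (t : ℝ) : |gg' t| ≤ 7 * |t| := by
  have hs : |Real.sin (Real.log t)| ≤ 1 := Real.abs_sin_le_one _
  have hc : |Real.cos (Real.log t)| ≤ 1 := Real.abs_cos_le_one _
  have h1 : |4 * t| = 4 * |t| := by rw [abs_mul]; norm_num
  have h2 : |2 * t * Real.sin (Real.log t)| ≤ 2 * |t| := by
    calc |2 * t * Real.sin (Real.log t)| = 2 * |t| * |Real.sin (Real.log t)| := by
          rw [abs_mul, abs_mul]; norm_num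
    _ ≤ 2 * |t| * 1 := by gcongr
    _ = 2 * |t| := mul_one _
  have h3 : |t * Real.cos (Real.log t)| ≤ |t| := by
    calc |t * Real.cos (Real.log t)| = |t| * |Real.cos (Real.log t)| := abs_mul _ _
    _ ≤ |t| * 1 := by gcongr
    _ = |t| := mul_one _
  calc |gg' t| ≤ |4 * t| + |2 * t * Real.sin (Real.log t)| + |t * Real.cos (Real.log t)| :=
        (abs_add_le _ _).trans (by gcongr; exact abs_add_le _ _)
  _ ≤ 7 * |t| := by rw [h1]; linarith

lemma gg''_bound (t : ℝ) : ‖gg'' t‖ ≤ 8 := by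
  have hs : |Real.sin (Real.log t)| ≤ 1 := Real.abs_sin_le_one _
  have hc : |Real.cos (Real.log t)| ≤ 1 := Real.abs_cos_le_one _
  rw [Real.norm_eq_abs]
  calc |gg'' t| ≤ |(4:ℝ)| + |Real.sin (Real.log t)| + |3 * Real.cos (Real.log t)| :=
        (abs_add_le _ _).trans (by gcongr; exact abs_add_le _ _)
  _ ≤ 4 + 1 + 3 := by
      have h3 : |3 * Real.cos (Real.log t)| ≤ 3 := by
        calc |3 * Real.cos (Real.log t)| = 3 * |Real.cos (Real.log t)| := by
              rw [abs_mul]; norm_num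
        _ ≤ 3 * 1 := by gcongr
        _ = 3 := mul_one _
      have h4 : |(4:ℝ)| = 4 := by norm_num
      rw [h4]; linarith
  _ = 8 := by norm_num

lemma gg'_lip : LipschitzWith 8 gg' := by
  have key : ∀ s : Set ℝ, Convex ℝ s → (0 : ℝ) ∉ s → ∀ x ∈ s, ∀ y ∈ s,
      ‖gg' y - gg' x‖ ≤ 8 * ‖y - x‖ := by
    intro s hs h0 x hx y hy
    exact hs.norm_image_sub_le_of_norm_hasDerivWithin_le
      (fun z hz => (hgg'_deriv (fun h => h0 (h ▸ hz))).hasDerivWithinAt)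
      (fun z _ => gg''_bound z) hx hy
  apply LipschitzWith.of_dist_le_mul
  intro x y
  rcases lt_trichotomy x 0 with hx | rfl | hx <;> rcases lt_trichotomy y 0 with hy | rfl | hy
  · simpa [Real.dist_eq, norm_sub_rev] using
      key (Iio 0) (convex_Iio 0) (by simp) x hx y hy
  · -- y = 0
    rw [Real.dist_eq, Real.dist_eq]
    have : gg' 0 = 0 := by simp [gg']
    rw [this, sub_zero, sub_zero]
    calc |gg' x| ≤ 7 * |x| := gg'_bound x
    _ ≤ 8 * |x| := by gcongr <;> norm_num
  · -- x < 0 < y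
    rw [Real.dist_eq, Real.dist_eq]
    calc |gg' x - gg' y| ≤ |gg' x| + |gg' y| := abs_sub _ _
    _ ≤ 7 * |x| + 7 * |y| := by gcongr <;> [exact gg'_bound x; exact gg'_bound y]
    _ ≤ 8 * |x - y| := by
        rw [abs_of_neg hx, abs_of_pos hy, abs_of_neg (by linarith)]; push_cast; linarith
  · rw [Real.dist_eq, Real.dist_eq]
    have : gg' 0 = 0 := by simp [gg']
    rw [this, zero_sub, zero_sub, abs_neg, abs_neg]
    calc |gg' y| ≤ 7 * |y| := gg'_bound y
    _ ≤ 8 * |y| := by gcongr <;> norm_num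
  · simp
  · rw [Real.dist_eq, Real.dist_eq]
    have : gg' 0 = 0 := by simp [gg']
    rw [this, zero_sub, zero_sub, abs_neg, abs_neg]
    calc |gg' y| ≤ 7 * |y| := gg'_bound y
    _ ≤ 8 * |y| := by gcongr <;> norm_num
  · rw [Real.dist_eq, Real.dist_eq]
    calc |gg' x - gg' y| ≤ |gg' x| + |gg' y| := abs_sub _ _
    _ ≤ 7 * |x| + 7 * |y| := by gcongr <;> [exact gg'_bound x; exact gg'_bound y]
    _ ≤ 8 * |x - y| := by
        rw [abs_of_pos hx, abs_of_neg hy, abs_of_pos (by linarith)]; push_cast; linarith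
  · rw [Real.dist_eq, Real.dist_eq]
    have : gg' 0 = 0 := by simp [gg']
    rw [this, sub_zero, sub_zero]
    calc |gg' x| ≤ 7 * |x| := gg'_bound x
    _ ≤ 8 * |x| := by gcongr <;> norm_num
  · simpa [Real.dist_eq, norm_sub_rev] using
      key (Ioi 0) (convex_Ioi 0) (by simp) x hx y hy

lemma f1_eq (x : EuclideanSpace ℝ (Fin 2)) : f1 x = gg (x 0) + ((x 1) ^ 2 + x 1) := by
  unfold f1 gg
  rcases eq_or_ne (x 0) 0 with h | h
  · simp [h]
  · rw [if_neg h, Real.log_abs]; ring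

lemma grad1_eq (x : EuclideanSpace ℝ (Fin 2)) :
    grad1 x = (WithLp.equiv 2 (Fin 2 → ℝ)).symm ![gg' (x 0), 2 * x 1 + 1] := by
  unfold grad1 gg'
  rcases eq_or_ne (x 0) 0 with h | h
  · rw [if_pos h, h]; norm_num
  · rw [if_neg h, Real.log_abs]

lemma hasGradient (x : EuclideanSpace ℝ (Fin 2)) : HasGradientAt f1 (grad1 x) x := by
  rw [hasGradientAt_iff_hasFDerivAt]
  have hD : HasFDerivAt f1
      (gg' (x 0) • (EuclideanSpace.proj 0 : EuclideanSpace ℝ (Fin 2) →L[ℝ] ℝ)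
        + (2 * x 1 + 1) • (EuclideanSpace.proj 1 : EuclideanSpace ℝ (Fin 2) →L[ℝ] ℝ)) x := by
    have hp0 : HasFDerivAt (fun y : EuclideanSpace ℝ (Fin 2) => y 0)
        (EuclideanSpace.proj 0 : EuclideanSpace ℝ (Fin 2) →L[ℝ] ℝ) x := by
      exact (EuclideanSpace.proj (0 : Fin 2) : EuclideanSpace ℝ (Fin 2) →L[ℝ] ℝ).hasFDerivAt
    have hp1 : HasFDerivAt (fun y : EuclideanSpace ℝ (Fin 2) => y 1)
        (EuclideanSpace.proj 1 : EuclideanSpace ℝ (Fin 2) →L[ℝ] ℝ) x := by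
      exact (EuclideanSpace.proj (1 : Fin 2) : EuclideanSpace ℝ (Fin 2) →L[ℝ] ℝ).hasFDerivAt
    have h0 : HasFDerivAt (fun y : EuclideanSpace ℝ (Fin 2) => gg (y 0))
        (gg' (x 0) • (EuclideanSpace.proj 0 : EuclideanSpace ℝ (Fin 2) →L[ℝ] ℝ)) x :=
      (hgg_deriv (x 0)).comp_hasFDerivAt (f := fun y : EuclideanSpace ℝ (Fin 2) => y 0) x hp0
    have hq : HasDerivAt (fun t : ℝ => t ^ 2 + t) (2 * x 1 + 1) (x 1) := by
      exact ((hasDerivAt_pow 2 (x 1)).add (hasDerivAt_id' (x 1))).congr_deriv (by norm_num)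
    have h1 : HasFDerivAt (fun y : EuclideanSpace ℝ (Fin 2) => (y 1) ^ 2 + y 1)
        ((2 * x 1 + 1) • (EuclideanSpace.proj 1 : EuclideanSpace ℝ (Fin 2) →L[ℝ] ℝ)) x :=
      hq.comp_hasFDerivAt (f := fun y : EuclideanSpace ℝ (Fin 2) => y 1) x hp1
    have := h0.add h1
    rw [show f1 = ((fun y : EuclideanSpace ℝ (Fin 2) => gg (y 0)) + fun y => y 1 ^ 2 + y 1) from funext f1_eq]
    exact this
  refine hD.congr_fderiv ?_
  apply ContinuousLinearMap.ext
  intro v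
  rw [InnerProductSpace.toDual_apply_apply, grad1_eq]
  simp [PiLp.inner_apply, Fin.sum_univ_two, PiLp.toLp_apply, WithLp.equiv_symm_apply]
  ring

lemma grad1_lip : LipschitzWith 8 grad1 := by
  apply LipschitzWith.of_dist_le_mul
  intro x y
  rw [grad1_eq, grad1_eq]
  rw [EuclideanSpace.dist_eq, EuclideanSpace.dist_eq]
  have hA : dist (gg' (x 0)) (gg' (y 0)) ≤ 8 * dist (x 0) (y 0) := gg'_lip.dist_le_mul _ _
  have hB : dist (2 * x 1 + 1) (2 * y 1 + 1) ≤ 8 * dist (x 1) (y 1) := by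
    rw [Real.dist_eq, Real.dist_eq]
    have : 2 * x 1 + 1 - (2 * y 1 + 1) = 2 * (x 1 - y 1) := by ring
    rw [this, abs_mul]
    have := abs_nonneg (x 1 - y 1)
    norm_num; linarith
  simp only [PiLp.toLp_apply, WithLp.equiv_symm_apply, Fin.sum_univ_two, Matrix.cons_val_zero,
    Matrix.cons_val_one, Matrix.head_cons]
  have key : dist (gg' (x 0)) (gg' (y 0)) ^ 2 + dist (2 * x 1 + 1) (2 * y 1 + 1) ^ 2
      ≤ 64 * (dist (x 0) (y 0) ^ 2 + dist (x 1) (y 1) ^ 2) := by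
    nlinarith [dist_nonneg (x := gg' (x 0)) (y := gg' (y 0)),
      dist_nonneg (x := 2 * x 1 + 1) (y := 2 * y 1 + 1),
      dist_nonneg (x := x 0) (y := y 0), dist_nonneg (x := x 1) (y := y 1), hA, hB]
  have h8 : ((8 : ℝ≥0) : ℝ) = 8 := by norm_num
  rw [h8]
  calc Real.sqrt (dist (gg' (x 0)) (gg' (y 0)) ^ 2 + dist (2 * x 1 + 1) (2 * y 1 + 1) ^ 2)
      ≤ Real.sqrt (64 * (dist (x 0) (y 0) ^ 2 + dist (x 1) (y 1) ^ 2)) := Real.sqrt_le_sqrt key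
  _ = 8 * Real.sqrt (dist (x 0) (y 0) ^ 2 + dist (x 1) (y 1) ^ 2) := by
      rw [show (64 : ℝ) = 8 ^ 2 by norm_num, Real.sqrt_mul (by positivity),
        Real.sqrt_sq (by norm_num)]


/-- Example 4.1: `f₁` is Fréchet differentiable with the indicated gradient, and the
gradient is locally Lipschitz, i.e. `f₁` is a `C^{1,1}` function. -/
theorem stmt_14 :
    Differentiable ℝ f1 ∧
    (∀ x, gradient f1 x = grad1 x) ∧
    LocallyLipschitz (gradient f1) := by
  have hgrad : ∀ x, gradient f1 x = grad1 x := fun x => (hasGradient x).gradient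
  refine ⟨fun x => (hasGradient x).differentiableAt, hgrad, ?_⟩
  rw [funext hgrad]
  exact grad1_lip.locallyLipschitz
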